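/- (Projected subgradient method for the generalized Heron problem) Let Ω, Ω₁, …, Ωₙ be nonempty closed convex subsets of ℝˢ with at least one of them bounded, and let D(x) = ∑_{i=1}^n d(x;Ωᵢ). Let (α_k)_{k≥1} be positive reals with ∑_{k=1}^∞ α_k = ∞ and ∑_{k=1}^∞ α_k² < ∞. Let x₁ ∈ Ω and define iteratively x_{k+1} = Π(x_k − α_k ∑_{i=1}^n v_{ik}; Ω), where v_{ik} = (x_k − Π(x_k;Ωᵢ))/d(x_k;Ωᵢ) if x_k ∉ Ωᵢ and v_{ik} = 0 if x_k ∈ Ωᵢ. Then the sequence (x_k) converges to an optimal solution x̄ of the generalized Heron problem (x̄ ∈ Ω and D(x̄) = inf_{x ∈ Ω} D(x)), and the value sequence V_k = min{D(x_j) : 1 ≤ j ≤ k} converges to the optimal value inf_{x ∈ Ω} D(x). -/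

import Mathlib

open scoped Classical

open Filter Metric
set_option linter.unusedSectionVars false
set_option maxHeartbeats 1000000


lemma my_le_infDist {E : Type*} [MetricSpace E] {s : Set E} (hs : s.Nonempty) {x : E} {b : ℝ}
    (h : ∀ y ∈ s, b ≤ dist x y) : b ≤ infDist x s := by
  by_contra hlt
  obtain ⟨y, hy, hyd⟩ := (infDist_lt_iff hs).1 (not_le.1 hlt)
  exact absurd (h y hy) (not_le.2 hyd)

variable {E : Type*} [NormedAddCommGroup E] [InnerProductSpace ℝ E]

/-- variational inequality for a metric projection on a convex set -/
lemma proj_vi {K : Set E} (hK : Convex ℝ K) {y p : E} (hp : p ∈ K)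
    (hd : dist y p = infDist y K) : ∀ w ∈ K, inner ℝ (y - p) (w - p) ≤ (0 : ℝ) := by
  rw [← norm_eq_iInf_iff_real_inner_le_zero hK hp]
  rw [infDist_eq_iInf] at hd
  simpa [dist_eq_norm] using hd

/-- nonexpansiveness of projection towards points of the set -/
lemma proj_dist_le {K : Set E} (hK : Convex ℝ K) {u p : E} (hp : p ∈ K)
    (hd : dist u p = infDist u K) {z : E} (hz : z ∈ K) : ‖p - z‖ ≤ ‖u - z‖ := by
  have hvi := proj_vi hK hp hd z hz
  have hexp : ‖u - z‖ ^ 2 = ‖u - p‖ ^ 2 + 2 * inner ℝ (u - p) (p - z) + ‖p - z‖ ^ 2 := by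
    have : u - z = (u - p) + (p - z) := by abel
    rw [this, norm_add_sq_real]
  have h1 : (0:ℝ) ≤ inner ℝ (u - p) (p - z) := by
    have : inner ℝ (u - p) (p - z) = -(inner ℝ (u - p) (z - p) : ℝ) := by
      rw [← inner_neg_right]; congr 1; abel
    rw [this]; linarith
  have h2 : ‖p - z‖ ^ 2 ≤ ‖u - z‖ ^ 2 := by nlinarith [norm_nonneg (u - p)]
  nlinarith [norm_nonneg (p - z), norm_nonneg (u - z)]

/-- subgradient inequality for the distance function -/
lemma dist_subgrad {K : Set E} (hK : Convex ℝ K) (hKne : K.Nonempty) {xx p : E} (hp : p ∈ K)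
    (hd : dist xx p = infDist xx K) (y : E) :
    (inner ℝ ((if xx ∈ K then 0 else (infDist xx K)⁻¹ • (xx - p))) (y - xx) : ℝ)
      ≤ infDist y K - infDist xx K := by
  split_ifs with hmem
  · simp [infDist_zero_of_mem hmem, infDist_nonneg]
  · set d := infDist xx K with hd'
    have hdpos : 0 < d := by
      rcases lt_or_eq_of_le (infDist_nonneg (x := xx) (s := K)) with h | h
      · exact h
      · exfalso; apply hmem
        have : dist xx p = 0 := by rw [hd, hd', ← h]
        rw [dist_eq_zero] at this; rwa [this]
    have hnorm : ‖xx - p‖ = d := by rw [← dist_eq_norm]; exact hd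
    set vv := d⁻¹ • (xx - p) with hv
    have key : ∀ q ∈ K, (inner ℝ vv (y - xx) : ℝ) ≤ dist y q - d := by
      intro q hq
      have hsplit : y - xx = (y - q) + (q - p) + (p - xx) := by abel
      have e1 : (inner ℝ vv (y - q) : ℝ) ≤ dist y q := by
        calc (inner ℝ vv (y - q) : ℝ) ≤ ‖vv‖ * ‖y - q‖ := real_inner_le_norm _ _
          _ ≤ 1 * ‖y - q‖ := by
              apply mul_le_mul_of_nonneg_right _ (norm_nonneg _)
              rw [hv, norm_smul, norm_inv, Real.norm_eq_abs, abs_of_pos hdpos, hnorm]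
              exact le_of_eq (inv_mul_cancel₀ (ne_of_gt hdpos))
          _ = dist y q := by rw [one_mul, dist_eq_norm]
      have e2 : (inner ℝ vv (q - p) : ℝ) ≤ 0 := by
        rw [hv, real_inner_smul_left]
        exact mul_nonpos_of_nonneg_of_nonpos (le_of_lt (inv_pos.2 hdpos))
          (proj_vi hK hp hd q hq)
      have e3 : (inner ℝ vv (p - xx) : ℝ) = -d := by
        rw [hv, real_inner_smul_left]
        have : (inner ℝ (xx - p) (p - xx) : ℝ) = -‖xx - p‖ ^2 := by
          have : p - xx = -(xx - p) := by abel
          rw [this, inner_neg_right, real_inner_self_eq_norm_sq]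
        rw [this, hnorm]
        rw [sq]
        field_simp
      calc (inner ℝ vv (y - xx) : ℝ)
          = inner ℝ vv (y - q) + inner ℝ vv (q - p) + inner ℝ vv (p - xx) := by
            rw [hsplit, inner_add_right, inner_add_right]
        _ ≤ dist y q + 0 + (-d) := by rw [e3]; exact add_le_add (add_le_add e1 e2) le_rfl
        _ = dist y q - d := by ring
    have : (inner ℝ vv (y - xx) : ℝ) + d ≤ infDist y K := by
      apply my_le_infDist hKne
      intro q hq
      linarith [key q hq]
    linarith

/-- quasi-monotone convergence -/
lemma quasi_mono_tendsto (a c : ℕ → ℝ) (ha : ∀ k, 0 ≤ a k) (hc : ∀ k, 0 ≤ c k)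
    (hsum : Summable c) (hrec : ∀ k, a (k + 1) ≤ a k + c k) :
    ∃ L, Tendsto a atTop (nhds L) := by
  set r : ℕ → ℝ := fun k => ∑' j, c (j + k) with hr
  have hrsum : ∀ k, Summable fun j => c (j + k) := fun k => (summable_nat_add_iff k).2 hsum
  have hrrec : ∀ k, r k = c k + r (k + 1) := by
    intro k
    have := (hrsum k).tsum_eq_zero_add
    simpa [hr, add_assoc, add_comm 1 k] using this
  have hrnonneg : ∀ k, 0 ≤ r k := fun k => tsum_nonneg (fun j => hc _)
  have hanti : Antitone (fun k => a k + r k) := by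
    apply antitone_nat_of_succ_le
    intro k
    have h1 := hrec k
    have h2 := hrrec k
    linarith
  have hbdd : BddBelow (Set.range fun k => a k + r k) := by
    refine ⟨0, ?_⟩
    rintro y ⟨k, rfl⟩
    have := ha k; have := hrnonneg k; positivity
  have hr0 : Tendsto r atTop (nhds 0) := tendsto_sum_nat_add c
  obtain ⟨L, hL⟩ : ∃ L, Tendsto (fun k => a k + r k) atTop (nhds L) :=
    ⟨_, tendsto_atTop_ciInf hanti hbdd⟩
  refine ⟨L, ?_⟩
  have := hL.sub hr0
  simpa using this

lemma exists_min {F : Type*} [NormedAddCommGroup F] [ProperSpace F]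
    {n : ℕ} (Ω : Set F) (Ωs : Fin n → Set F) (hΩne : Ω.Nonempty) (hΩcl : IsClosed Ω)
    (hne : ∀ i, (Ωs i).Nonempty)
    (hbd : Bornology.IsBounded Ω ∨ ∃ i, Bornology.IsBounded (Ωs i)) :
    ∃ z ∈ Ω, ∀ y ∈ Ω, ∑ i, infDist z (Ωs i) ≤ ∑ i, infDist y (Ωs i) := by
  set D : F → ℝ := fun z => ∑ i, infDist z (Ωs i) with hD
  have hDcont : Continuous D := continuous_finset_sum _ fun i _ => continuous_infDist_pt _
  rcases hbd with hb | ⟨i, hb⟩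
  · obtain ⟨z, hz, hmin⟩ := (isCompact_of_isClosed_isBounded hΩcl hb).exists_isMinOn hΩne
      hDcont.continuousOn
    exact ⟨z, hz, fun y hy => hmin hy⟩
  · obtain ⟨a, ha⟩ := hΩne
    obtain ⟨M, hM⟩ := hb.subset_closedBall 0
    have hcoer : ∀ w : F, ‖w‖ - M ≤ D w := by
      intro w
      have h1 : ‖w‖ - M ≤ infDist w (Ωs i) := by
        apply my_le_infDist (hne i)
        intro q hq
        have hqM : ‖q‖ ≤ M := by simpa using hM hq
        have := norm_sub_norm_le w q
        rw [dist_eq_norm]; linarith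
      have h2 : infDist w (Ωs i) ≤ D w :=
        Finset.single_le_sum (fun j _ => infDist_nonneg) (Finset.mem_univ i)
      linarith
    have hc : ∀ᶠ w in Filter.cocompact F ⊓ Filter.principal Ω, D a ≤ D w := by
      apply Filter.Eventually.filter_mono inf_le_left
      rw [Filter.eventually_iff, Filter.mem_cocompact]
      refine ⟨closedBall 0 (M + D a), isCompact_closedBall _ _, ?_⟩
      intro w hw
      simp only [Set.mem_compl_iff, mem_closedBall, dist_zero_right, not_le] at hw
      have := hcoer w
      simp only [Set.mem_setOf_eq]
      linarith
    obtain ⟨z, hz, hmin⟩ := hDcont.continuousOn.exists_isMinOn' hΩcl ha hc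
    exact ⟨z, hz, fun y hy => hmin hy⟩


/-- Theorem 4.1: the projected subgradient method for the generalized Heron problem.
If one of the nonempty closed convex sets `Ω, Ω₁, …, Ωₙ` is bounded and the step
sizes `αₖ > 0` satisfy `∑ αₖ = ∞`, `∑ αₖ² < ∞`, then the iterates
`x_{k+1} = Π(x_k - αₖ ∑ i, v_{ik}; Ω)` converge to an optimal solution `xbar` of the
problem, and the record values `V_k = min_{j ≤ k} D(x_j)` converge to the optimal
value `D(xbar)`. -/
theorem heron_projected_subgradient_method {s n : ℕ}
    (Ω : Set (EuclideanSpace ℝ (Fin s))) (Ωs : Fin n → Set (EuclideanSpace ℝ (Fin s)))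
    (hΩne : Ω.Nonempty) (hΩcl : IsClosed Ω) (hΩcv : Convex ℝ Ω)
    (hne : ∀ i, (Ωs i).Nonempty) (hcl : ∀ i, IsClosed (Ωs i)) (hcv : ∀ i, Convex ℝ (Ωs i))
    (hbd : Bornology.IsBounded Ω ∨ ∃ i, Bornology.IsBounded (Ωs i))
    (projΩ : EuclideanSpace ℝ (Fin s) → EuclideanSpace ℝ (Fin s))
    (hprojΩ : ∀ y, projΩ y ∈ Ω ∧ dist y (projΩ y) = Metric.infDist y Ω)
    (proj : Fin n → EuclideanSpace ℝ (Fin s) → EuclideanSpace ℝ (Fin s))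
    (hproj : ∀ i y, proj i y ∈ Ωs i ∧ dist y (proj i y) = Metric.infDist y (Ωs i))
    (α : ℕ → ℝ) (hαpos : ∀ k, 0 < α k)
    (hαdiv : Filter.Tendsto (fun K => ∑ k ∈ Finset.range K, α k) Filter.atTop Filter.atTop)
    (hαsq : Summable fun k => (α k) ^ 2)
    (x : ℕ → EuclideanSpace ℝ (Fin s)) (hx0 : x 0 ∈ Ω)
    (v : ℕ → Fin n → EuclideanSpace ℝ (Fin s))
    (hv : ∀ k i, v k i =
      if x k ∈ Ωs i then 0
      else (Metric.infDist (x k) (Ωs i))⁻¹ • (x k - proj i (x k)))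
    (hrec : ∀ k, x (k + 1) = projΩ (x k - α k • ∑ i, v k i))
    (V : ℕ → ℝ)
    (hV : ∀ k, V k = (Finset.range (k + 1)).inf' Finset.nonempty_range_add_one
      (fun j => ∑ i, Metric.infDist (x j) (Ωs i))) :
    ∃ xbar ∈ Ω,
      (∀ y ∈ Ω, ∑ i, Metric.infDist xbar (Ωs i) ≤ ∑ i, Metric.infDist y (Ωs i)) ∧
      Filter.Tendsto x Filter.atTop (nhds xbar) ∧
      Filter.Tendsto V Filter.atTop (nhds (∑ i, Metric.infDist xbar (Ωs i))) := by
  set D : EuclideanSpace ℝ (Fin s) → ℝ := fun z => ∑ i, infDist z (Ωs i) with hD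
  have hDcont : Continuous D := continuous_finset_sum _ fun i _ => continuous_infDist_pt _
  obtain ⟨xs, hxsΩ, hxsmin⟩ := exists_min Ω Ωs hΩne hΩcl hne hbd
  -- iterates stay in Ω
  have hxΩ : ∀ k, x k ∈ Ω := by
    intro k; induction k with
    | zero => exact hx0
    | succ k ih => rw [hrec k]; exact (hprojΩ _).1
  have hβ : ∀ k, 0 ≤ D (x k) - D xs := fun k => sub_nonneg.2 (hxsmin _ (hxΩ k))
  set g : ℕ → EuclideanSpace ℝ (Fin s) := fun k => ∑ i, v k i with hg
  -- subgradient inequality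
  have hsubg : ∀ k y, (inner ℝ (g k) (y - x k) : ℝ) ≤ D y - D (x k) := by
    intro k y
    rw [hg]
    simp only
    rw [sum_inner]
    have hsum : D y - D (x k) = ∑ i, (infDist y (Ωs i) - infDist (x k) (Ωs i)) := by
      rw [hD]; rw [Finset.sum_sub_distrib]
    rw [hsum]
    apply Finset.sum_le_sum
    intro i _
    rw [hv k i]
    exact dist_subgrad (hcv i) (hne i) (hproj i (x k)).1 (hproj i (x k)).2 y
  -- norm bound on subgradients
  have hgnorm : ∀ k, ‖g k‖ ≤ (n : ℝ) := by
    intro k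
    calc ‖g k‖ ≤ ∑ i, ‖v k i‖ := norm_sum_le _ _
      _ ≤ ∑ _i : Fin n, (1:ℝ) := by
          apply Finset.sum_le_sum
          intro i _
          rw [hv k i]
          split_ifs with hmem
          · simp
          · have hdpos : 0 < infDist (x k) (Ωs i) :=
              ((hcl i).notMem_iff_infDist_pos (hne i)).1 hmem
            have hnorm : ‖x k - proj i (x k)‖ = infDist (x k) (Ωs i) := by
              rw [← dist_eq_norm]; exact (hproj i (x k)).2
            rw [norm_smul, norm_inv, Real.norm_eq_abs, abs_of_pos hdpos, hnorm]
            exact le_of_eq (inv_mul_cancel₀ (ne_of_gt hdpos))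
      _ = n := by simp
  -- key inequality
  have key : ∀ z ∈ Ω, ∀ k, ‖x (k+1) - z‖^2
      ≤ ‖x k - z‖^2 - 2 * α k * (D (x k) - D z) + α k ^2 * (n:ℝ)^2 := by
    intro z hz k
    have h1 : ‖x (k+1) - z‖ ≤ ‖(x k - α k • g k) - z‖ := by
      rw [hrec k]
      exact proj_dist_le hΩcv (hprojΩ _).1 (hprojΩ _).2 hz
    have h2 : ‖x (k+1) - z‖^2 ≤ ‖(x k - α k • g k) - z‖^2 :=
      pow_le_pow_left₀ (norm_nonneg _) h1 2
    have h3 : ‖(x k - α k • g k) - z‖^2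
        = ‖x k - z‖^2 - 2 * (α k * inner ℝ (g k) (x k - z)) + α k^2 * ‖g k‖^2 := by
      have hre : (x k - α k • g k) - z = (x k - z) - α k • g k := by abel
      rw [hre, norm_sub_sq_real, real_inner_smul_right, norm_smul, Real.norm_eq_abs,
        mul_pow, sq_abs, real_inner_comm]
    have h5 : D (x k) - D z ≤ inner ℝ (g k) (x k - z) := by
      have hne' : (inner ℝ (g k) (x k - z) : ℝ) = - inner ℝ (g k) (z - x k) := by
        rw [← inner_neg_right]; congr 1; abel
      have := hsubg k z
      rw [hne']; linarith
    have h6 : ‖g k‖^2 ≤ (n:ℝ)^2 := pow_le_pow_left₀ (norm_nonneg _) (hgnorm k) 2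
    have h7 : 2 * (α k * (D (x k) - D z)) ≤ 2 * (α k * inner ℝ (g k) (x k - z)) := by
      apply mul_le_mul_of_nonneg_left _ (by norm_num : (0:ℝ) ≤ 2)
      exact mul_le_mul_of_nonneg_left h5 (hαpos k).le
    have h8 : α k^2 * ‖g k‖^2 ≤ α k^2 * (n:ℝ)^2 := mul_le_mul_of_nonneg_left h6 (sq_nonneg _)
    rw [h3] at h2
    linarith
  -- telescoped bound
  have htel : ∀ K, ‖x K - xs‖^2 + 2 * ∑ k ∈ Finset.range K, α k * (D (x k) - D xs)
      ≤ ‖x 0 - xs‖^2 + (n:ℝ)^2 * ∑ k ∈ Finset.range K, α k^2 := by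
    intro K; induction K with
    | zero => simp
    | succ K ih =>
      have hk := key xs hxsΩ K
      rw [Finset.sum_range_succ, Finset.sum_range_succ]
      linarith
  set S := ∑' k, α k^2 with hS
  have hSnn : 0 ≤ S := tsum_nonneg fun k => sq_nonneg _
  have hSsum : ∀ K, ∑ k ∈ Finset.range K, α k^2 ≤ S :=
    fun K => Summable.sum_le_tsum _ (fun _ _ => sq_nonneg _) hαsq
  set C := ‖x 0 - xs‖^2 + (n:ℝ)^2 * S with hC
  have hCnn : 0 ≤ C := by positivity
  have hsumbound : ∀ K, 2 * ∑ k ∈ Finset.range K, α k * (D (x k) - D xs) ≤ C := by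
    intro K
    have h1 := htel K
    have h2 : (n:ℝ)^2 * ∑ k ∈ Finset.range K, α k^2 ≤ (n:ℝ)^2 * S :=
      mul_le_mul_of_nonneg_left (hSsum K) (by positivity)
    have h3 : 0 ≤ ‖x K - xs‖^2 := sq_nonneg _
    rw [hC]; linarith
  have hebound : ∀ K, ‖x K - xs‖^2 ≤ C := by
    intro K
    have h1 := htel K
    have h2 : (n:ℝ)^2 * ∑ k ∈ Finset.range K, α k^2 ≤ (n:ℝ)^2 * S :=
      mul_le_mul_of_nonneg_left (hSsum K) (by positivity)
    have h3 : 0 ≤ ∑ k ∈ Finset.range K, α k * (D (x k) - D xs) :=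
      Finset.sum_nonneg fun k _ => mul_nonneg (hαpos k).le (hβ k)
    rw [hC]; linarith
  -- frequently small values
  have hfreq : ∀ m : ℕ, ∃ᶠ k in atTop, D (x k) - D xs < 1/((m:ℝ)+1) := by
    intro m
    set ε : ℝ := 1/((m:ℝ)+1) with hε
    have hεpos : 0 < ε := by positivity
    by_contra hcon
    rw [Filter.not_frequently] at hcon
    obtain ⟨N, hN⟩ := Filter.eventually_atTop.1 hcon
    obtain ⟨K, hKN, hK⟩ : ∃ K, N ≤ K ∧
        (∑ k ∈ Finset.range N, α k) + (C/2 + 1)/ε ≤ ∑ k ∈ Finset.range K, α k := by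
      have hev := hαdiv.eventually_ge_atTop ((∑ k ∈ Finset.range N, α k) + (C/2+1)/ε)
      obtain ⟨K0, hK0⟩ := (hev.and (Filter.eventually_ge_atTop N)).exists
      exact ⟨K0, hK0.2, hK0.1⟩
    have hsplit : ∑ k ∈ Finset.Ico N K, α k * (D (x k) - D xs)
        ≤ ∑ k ∈ Finset.range K, α k * (D (x k) - D xs) := by
      rw [Finset.range_eq_Ico, ← Finset.sum_Ico_consecutive _ (Nat.zero_le N) hKN]
      have h0 : 0 ≤ ∑ k ∈ Finset.Ico 0 N, α k * (D (x k) - D xs) :=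
        Finset.sum_nonneg fun k _ => mul_nonneg (hαpos k).le (hβ k)
      linarith
    have hlow : ε * ∑ k ∈ Finset.Ico N K, α k ≤ ∑ k ∈ Finset.Ico N K, α k * (D (x k) - D xs) := by
      rw [Finset.mul_sum]
      apply Finset.sum_le_sum
      intro k hk
      have hkN : N ≤ k := (Finset.mem_Ico.1 hk).1
      have hεk := not_lt.1 (hN k hkN)
      calc ε * α k = α k * ε := mul_comm _ _
        _ ≤ α k * (D (x k) - D xs) := mul_le_mul_of_nonneg_left hεk (hαpos k).le
    have hIco : ∑ k ∈ Finset.Ico N K, α k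
        = (∑ k ∈ Finset.range K, α k) - ∑ k ∈ Finset.range N, α k := by
      rw [Finset.range_eq_Ico, Finset.range_eq_Ico, ← Finset.sum_Ico_consecutive _ (Nat.zero_le N) hKN]
      ring
    have hmain : ε * ((C/2+1)/ε) ≤ ∑ k ∈ Finset.range K, α k * (D (x k) - D xs) := by
      calc ε * ((C/2+1)/ε) ≤ ε * ∑ k ∈ Finset.Ico N K, α k := by
            apply mul_le_mul_of_nonneg_left _ hεpos.le
            rw [hIco]; linarith
        _ ≤ _ := le_trans hlow hsplit
    rw [mul_div_cancel₀ _ (ne_of_gt hεpos)] at hmain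
    have hCb := hsumbound K
    linarith
  obtain ⟨φ, hφmono, hφ⟩ := Filter.extraction_forall_of_frequently hfreq
  -- compactness and subsequence limit
  set R := Real.sqrt C with hR
  have hxball : ∀ k, x k ∈ Ω ∩ closedBall xs R := by
    intro k
    refine ⟨hxΩ k, ?_⟩
    rw [mem_closedBall, dist_eq_norm, hR]
    rw [show ‖x k - xs‖ = Real.sqrt (‖x k - xs‖^2) by
      rw [Real.sqrt_sq (norm_nonneg _)]]
    exact Real.sqrt_le_sqrt (hebound k)
  have hcomp : IsCompact (Ω ∩ closedBall xs R) :=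
    (isCompact_closedBall _ _).inter_left hΩcl
  obtain ⟨xbar, hxbarmem, ψ, hψmono, hψtend⟩ :=
    hcomp.tendsto_subseq (fun m => hxball (φ m))
  have hxbarΩ : xbar ∈ Ω := hxbarmem.1
  -- D xbar = D xs
  have hDφ : Tendsto (fun m => D (x (φ m))) atTop (nhds (D xs)) := by
    have hup : Tendsto (fun m : ℕ => D xs + 1/((m:ℝ)+1)) atTop (nhds (D xs)) := by
      have := tendsto_one_div_add_atTop_nhds_zero_nat (𝕜 := ℝ)
      simpa using tendsto_const_nhds.add this
    apply tendsto_of_tendsto_of_tendsto_of_le_of_le tendsto_const_nhds hup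
    · intro m; exact hxsmin _ (hxΩ _)
    · intro m; have := hφ m; linarith
  have hDψ : Tendsto (fun m => D (x (φ (ψ m)))) atTop (nhds (D xs)) :=
    hDφ.comp hψmono.tendsto_atTop
  have hDψ' : Tendsto (fun m => D (x (φ (ψ m)))) atTop (nhds (D xbar)) :=
    (hDcont.tendsto xbar).comp hψtend
  have hDbar : D xbar = D xs := tendsto_nhds_unique hDψ' hDψ
  -- quasi-monotone convergence towards xbar
  have hkey2 : ∀ k, ‖x (k+1) - xbar‖^2 ≤ ‖x k - xbar‖^2 + (n:ℝ)^2 * α k^2 := by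
    intro k
    have hk := key xbar hxbarΩ k
    have hβ' : 0 ≤ D (x k) - D xbar := by rw [hDbar]; exact hβ k
    have hprod : 0 ≤ 2 * α k * (D (x k) - D xbar) := by
      apply mul_nonneg _ hβ'
      have := (hαpos k).le; linarith
    nlinarith
  obtain ⟨L, hL⟩ := quasi_mono_tendsto (fun k => ‖x k - xbar‖^2) (fun k => (n:ℝ)^2 * α k^2)
    (fun k => sq_nonneg _) (fun k => by positivity) (hαsq.mul_left _) hkey2
  have hsub0 : Tendsto (fun m => ‖x (φ (ψ m)) - xbar‖^2) atTop (nhds 0) := by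
    have h1 : Tendsto (fun m => ‖x (φ (ψ m)) - xbar‖) atTop (nhds 0) := by
      have := tendsto_iff_norm_sub_tendsto_zero.1 hψtend
      simpa using this
    have := h1.pow 2
    simpa using this
  have hL0 : L = 0 := by
    have hcompseq : Tendsto (fun m => ‖x (φ (ψ m)) - xbar‖^2) atTop (nhds L) :=
      hL.comp (hφmono.comp hψmono).tendsto_atTop
    exact tendsto_nhds_unique hcompseq hsub0
  have hxconv : Tendsto x atTop (nhds xbar) := by
    rw [tendsto_iff_norm_sub_tendsto_zero]
    have h2 : Tendsto (fun k => ‖x k - xbar‖^2) atTop (nhds 0) := hL0 ▸ hL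
    have h3 := (Real.continuous_sqrt.tendsto 0).comp h2
    simp only [Function.comp_def, Real.sqrt_zero] at h3
    convert h3 using 2 with k
    rw [Real.sqrt_sq (norm_nonneg _)]
  -- value convergence
  have hDx : Tendsto (fun k => D (x k)) atTop (nhds (D xbar)) :=
    (hDcont.tendsto xbar).comp hxconv
  have hVtend : Tendsto V atTop (nhds (D xbar)) := by
    apply tendsto_of_tendsto_of_tendsto_of_le_of_le tendsto_const_nhds hDx
    · intro k
      rw [hV k, hDbar]
      apply Finset.le_inf'
      intro j _
      exact hxsmin _ (hxΩ j)
    · intro k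
      rw [hV k]
      exact Finset.inf'_le _ (Finset.self_mem_range_succ k)
  refine ⟨xbar, hxbarΩ, ?_, hxconv, hVtend⟩
  intro y hy
  have := hxsmin y hy
  show D xbar ≤ D y
  rw [hDbar]; exact this
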